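/- For an A-bounded operator T and q ∈ ℂ with 0 < |q| ≤ 1, one has ω_{A,q}(T) + ω_{A,q̄}(T) ≤ 2ω_A(T) + 2√2 · √(1 − Re q) · ‖T‖_A. -/

import Mathlib

noncomputable def innA {H : Type*} [NormedAddCommGroup H] [InnerProductSpace ℂ H]
    (A : H →L[ℂ] H) (x y : H) : ℂ := inner ℂ (A x) y

noncomputable def snA {H : Type*} [NormedAddCommGroup H] [InnerProductSpace ℂ H]
    (A : H →L[ℂ] H) (x : H) : ℝ := Real.sqrt (innA A x x).re

noncomputable def opNormA {H : Type*} [NormedAddCommGroup H] [InnerProductSpace ℂ H]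
    (A T : H →L[ℂ] H) : ℝ := sSup {r : ℝ | ∃ x : H, snA A x = 1 ∧ r = snA A (T x)}

def ABounded {H : Type*} [NormedAddCommGroup H] [InnerProductSpace ℂ H]
    (A T : H →L[ℂ] H) : Prop := ∃ c > 0, ∀ x : H, snA A (T x) ≤ c * snA A x

noncomputable def wAq {H : Type*} [NormedAddCommGroup H] [InnerProductSpace ℂ H]
    (A T : H →L[ℂ] H) (q : ℂ) : ℝ :=
  sSup {r : ℝ | ∃ x y : H, snA A x = 1 ∧ snA A y = 1 ∧ innA A x y = q ∧
    r = ‖innA A (T x) y‖}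

noncomputable def cAq {H : Type*} [NormedAddCommGroup H] [InnerProductSpace ℂ H]
    (A T : H →L[ℂ] H) (q : ℂ) : ℝ :=
  sInf {r : ℝ | ∃ x y : H, snA A x = 1 ∧ snA A y = 1 ∧ innA A x y = q ∧
    r = ‖innA A (T x) y‖}

noncomputable def wA {H : Type*} [NormedAddCommGroup H] [InnerProductSpace ℂ H]
    (A T : H →L[ℂ] H) : ℝ :=
  sSup {r : ℝ | ∃ x : H, snA A x = 1 ∧ r = ‖innA A (T x) x‖}

noncomputable def cA {H : Type*} [NormedAddCommGroup H] [InnerProductSpace ℂ H]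
    (A T : H →L[ℂ] H) : ℝ :=
  sInf {r : ℝ | ∃ x : H, snA A x = 1 ∧ r = ‖innA A (T x) x‖}

def WAq {H : Type*} [NormedAddCommGroup H] [InnerProductSpace ℂ H]
    (A T : H →L[ℂ] H) (q : ℂ) : Set ℂ :=
  {r : ℂ | ∃ x y : H, snA A x = 1 ∧ snA A y = 1 ∧ innA A x y = q ∧ r = innA A (T x) y}

section Aux

variable {H : Type*} [NormedAddCommGroup H] [InnerProductSpace ℂ H] [CompleteSpace H]

lemma symA (A : H →L[ℂ] H) (hA : A.IsPositive) (x y : H) :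
    (inner ℂ (A x) y : ℂ) = inner ℂ x (A y) :=
  hA.1 x y

noncomputable def coreA (A : H →L[ℂ] H) (hA : A.IsPositive) :
    PreInnerProductSpace.Core ℂ H where
  inner x y := inner ℂ (A x) y
  conj_inner_symm x y := by
    rw [inner_conj_symm, symA A hA]
  re_inner_nonneg x := hA.re_inner_nonneg_left x
  add_left x y z := by simp [inner_add_left]
  smul_left x y r := by simp [inner_smul_left, mul_comm]

lemma innA_re_nonneg (A : H →L[ℂ] H) (hA : A.IsPositive) (x : H) :
    0 ≤ (innA A x x).re := hA.re_inner_nonneg_left x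

omit [CompleteSpace H] in
lemma snA_nonneg (A : H →L[ℂ] H) (x : H) : 0 ≤ snA A x := Real.sqrt_nonneg _

lemma cauchyA (A : H →L[ℂ] H) (hA : A.IsPositive) (x y : H) :
    ‖innA A x y‖ ≤ snA A x * snA A y := by
  have h := @InnerProductSpace.Core.inner_mul_inner_self_le ℂ H _ _ _ (coreA A hA) x y
  have hsymm : ‖(inner ℂ (A y) x : ℂ)‖ = ‖(inner ℂ (A x) y : ℂ)‖ := by
    rw [← inner_conj_symm, symA A hA]
    exact RCLike.norm_conj _
  have h2 : ‖(inner ℂ (A x) y : ℂ)‖ ^ 2 ≤ (innA A x x).re * (innA A y y).re := by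
    have : ‖(inner ℂ (A x) y : ℂ)‖ * ‖(inner ℂ (A y) x : ℂ)‖
        ≤ (innA A x x).re * (innA A y y).re := h
    rw [hsymm] at this; nlinarith [norm_nonneg (inner ℂ (A x) y : ℂ)]
  have := Real.sqrt_le_sqrt h2
  rw [Real.sqrt_sq (norm_nonneg _),
    Real.sqrt_mul (innA_re_nonneg A hA x)] at this
  simpa [innA, snA] using this

lemma exists_unitA (A : H →L[ℂ] H) (hA : A.IsPositive) (hA0 : A ≠ 0) :
    ∃ x : H, snA A x = 1 := by
  have hne : ∃ x : H, (inner ℂ (A x) x : ℂ) ≠ 0 := by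
    by_contra h
    push_neg at h
    have : (A : H →ₗ[ℂ] H) = 0 := (inner_map_self_eq_zero _).mp h
    exact hA0 (by ext z; exact congrFun (congrArg DFunLike.coe this) z)
  obtain ⟨x, hx⟩ := hne
  have him : (inner ℂ (A x) x : ℂ).im = 0 := by
    have h2 : (starRingEnd ℂ) (inner ℂ (A x) x : ℂ) = inner ℂ (A x) x := by
      rw [inner_conj_symm]
      exact (symA A hA x x).symm
    have h3 := congrArg Complex.im h2
    simp only [Complex.conj_im] at h3
    linarith
  have hre : 0 < (innA A x x).re := by
    rcases (innA_re_nonneg A hA x).lt_or_eq with h | h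
    · exact h
    · exact absurd (Complex.ext (show (inner ℂ (A x) x : ℂ).re = (0 : ℂ).re by
        simpa [innA] using h.symm) (by simpa using him)) hx
  set s := Real.sqrt (innA A x x).re with hsdef
  have hs : 0 < s := Real.sqrt_pos.mpr hre
  refine ⟨((s : ℂ))⁻¹ • x, ?_⟩
  have hval : innA A ((s : ℂ)⁻¹ • x) ((s : ℂ)⁻¹ • x)
      = ((s⁻¹ * s⁻¹ : ℝ) : ℂ) * innA A x x := by
    simp only [innA, map_smul, inner_smul_left, inner_smul_right]
    rw [← Complex.ofReal_inv, Complex.conj_ofReal]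
    push_cast
    ring
  have hre2 : (innA A ((s : ℂ)⁻¹ • x) ((s : ℂ)⁻¹ • x)).re = 1 := by
    rw [hval, Complex.re_ofReal_mul]
    have hss : s * s = (innA A x x).re := Real.mul_self_sqrt hre.le
    field_simp
    linarith [hss]
  rw [snA, hre2, Real.sqrt_one]

end Aux

theorem stmt8 {H : Type*} [NormedAddCommGroup H] [InnerProductSpace ℂ H] [CompleteSpace H]
    (A T : H →L[ℂ] H) (hA : A.IsPositive) (hA0 : A ≠ 0) (hT : ABounded A T)
    (q : ℂ) (hq0 : 0 < ‖q‖) (hq1 : ‖q‖ ≤ 1) :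
    wAq A T q + wAq A T ((starRingEnd ℂ) q) ≤
      2 * wA A T + 2 * Real.sqrt 2 * Real.sqrt (1 - q.re) * opNormA A T := by
  obtain ⟨c, hc0, hc⟩ := hT
  obtain ⟨x0, hx0⟩ := exists_unitA A hA hA0
  -- boundedness of the wA set
  have hbW : BddAbove {r : ℝ | ∃ x : H, snA A x = 1 ∧ r = ‖innA A (T x) x‖} := by
    refine ⟨c, ?_⟩
    rintro r ⟨x, hx, rfl⟩
    calc ‖innA A (T x) x‖ ≤ snA A (T x) * snA A x := cauchyA A hA _ _
      _ ≤ (c * snA A x) * snA A x := by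
          exact mul_le_mul_of_nonneg_right (hc x) (snA_nonneg A x)
      _ = c := by rw [hx]; ring
  have hbO : BddAbove {r : ℝ | ∃ x : H, snA A x = 1 ∧ r = snA A (T x)} := by
    refine ⟨c, ?_⟩
    rintro r ⟨x, hx, rfl⟩
    calc snA A (T x) ≤ c * snA A x := hc x
      _ = c := by rw [hx, mul_one]
  have hwmem : ∀ x : H, snA A x = 1 → ‖innA A (T x) x‖ ≤ wA A T := by
    intro x hx
    exact le_csSup hbW ⟨x, hx, rfl⟩
  have homem : ∀ x : H, snA A x = 1 → snA A (T x) ≤ opNormA A T := by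
    intro x hx
    exact le_csSup hbO ⟨x, hx, rfl⟩
  have hwnn : 0 ≤ wA A T :=
    le_trans (norm_nonneg _) (hwmem x0 hx0)
  have honn : 0 ≤ opNormA A T := le_trans (snA_nonneg A (T x0)) (homem x0 hx0)
  -- the key bound
  have key : ∀ q' : ℂ, wAq A T q' ≤
      wA A T + Real.sqrt 2 * Real.sqrt (1 - q'.re) * opNormA A T := by
    intro q'
    apply Real.sSup_le
    · rintro r ⟨x, y, hx, hy, hxy, rfl⟩
      have hxx : (innA A x x).re = 1 := by
        have := congrArg (· ^ 2) hx
        simpa [snA, Real.sq_sqrt (innA_re_nonneg A hA x)] using this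
      have hyy : (innA A y y).re = 1 := by
        have := congrArg (· ^ 2) hy
        simpa [snA, Real.sq_sqrt (innA_re_nonneg A hA y)] using this
      -- norm of y - x
      have hyx : innA A (y - x) (y - x)
          = innA A y y - innA A y x - innA A x y + innA A x x := by
        simp [innA, inner_sub_left, inner_sub_right, map_sub]
        ring
      have hconj : innA A y x = (starRingEnd ℂ) (innA A x y) := by
        simp only [innA]
        rw [← inner_conj_symm, symA A hA]
      have hre : (innA A (y - x) (y - x)).re = 2 - 2 * q'.re := by
        rw [hyx, hconj, hxy]
        simp [Complex.sub_re, Complex.add_re, hxx, hyy]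
        ring
      have hsn : snA A (y - x) = Real.sqrt 2 * Real.sqrt (1 - q'.re) := by
        rw [snA, hre, ← Real.sqrt_mul (by norm_num : (0:ℝ) ≤ 2)]
        ring_nf
      have hsplit : innA A (T x) y = innA A (T x) x + innA A (T x) (y - x) := by
        simp [innA, inner_sub_right]
      calc ‖innA A (T x) y‖
          ≤ ‖innA A (T x) x‖ + ‖innA A (T x) (y - x)‖ := by
            rw [hsplit]; exact norm_add_le _ _
        _ ≤ wA A T + snA A (T x) * snA A (y - x) :=
            add_le_add (hwmem x hx) (cauchyA A hA _ _)
        _ ≤ wA A T + opNormA A T * snA A (y - x) := by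
            exact add_le_add_right
              (mul_le_mul_of_nonneg_right (homem x hx) (snA_nonneg A _)) _
        _ = wA A T + Real.sqrt 2 * Real.sqrt (1 - q'.re) * opNormA A T := by
            rw [hsn]; ring
    · positivity
  have h1 := key q
  have h2 := key ((starRingEnd ℂ) q)
  rw [Complex.conj_re] at h2
  linarith
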